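/- For every integer r ≥ 3, for every maximum matching M of the graph G_{2r+1} there exist two distinct M-unsaturated vertices that have a common neighbor. -/

import Mathlib

/-- A matching `M` of `G` is maximum if no matching of `G` has more edges. -/
def SimpleGraph.IsMaximumMatching {α : Type*} (G : SimpleGraph α) (M : G.Subgraph) : Prop :=
  M.IsMatching ∧ ∀ M' : G.Subgraph, M'.IsMatching → M'.edgeSet.ncard ≤ M.edgeSet.ncard

/-- The (underlying simple) graph `G_n` of the paper (used with `n = 2r + 1`):
the vertices `x, y, z` are encoded as `Sum.inl 0, Sum.inl 1, Sum.inl 2`, the vertex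
`v_{k+1}^{(i)}` is encoded as `Sum.inr (k, i)`; `x` is joined to every `v_1^{(i)}`,
`y` to every `v_2^{(i)}`, `z` to every `v_3^{(i)}`, and for each `i` the vertices
`v_1^{(i)}, v_2^{(i)}, v_3^{(i)}` form a triangle. -/
def GGraph (n : ℕ) : SimpleGraph (Fin 3 ⊕ Fin 3 × Fin n) where
  Adj a b :=
    match a, b with
    | .inl k, .inr p => p.1 = k
    | .inr p, .inl k => p.1 = k
    | .inr p, .inr q => p.2 = q.2 ∧ p.1 ≠ q.1
    | _, _ => False
  symm := by
    constructor
    rintro (k | p) (k' | q) h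
    · exact h
    · exact h
    · exact h
    · exact ⟨h.1.symm, h.2.symm⟩
  loopless := by
    constructor
    rintro (k | p) h
    · exact h
    · exact h.2 rfl

/-- For every maximum matching `M` of `G_{2r+1}` there exist two distinct
`M`-unsaturated vertices that have a common neighbor. -/
theorem stmt_10 (r : ℕ) (hr : 3 ≤ r) (M : (GGraph (2 * r + 1)).Subgraph)
    (hM : (GGraph (2 * r + 1)).IsMaximumMatching M) :
    ∃ a b, a ≠ b ∧ (∀ c, ¬ M.Adj a c) ∧ (∀ c, ¬ M.Adj b c) ∧
      ∃ w, (GGraph (2 * r + 1)).Adj w a ∧ (GGraph (2 * r + 1)).Adj w b := by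
  classical
  obtain ⟨hmatch, -⟩ := hM
  have uniq : ∀ {v w w' : Fin 3 ⊕ Fin 3 × Fin (2 * r + 1)},
      M.Adj v w → M.Adj v w' → w = w' := by
    intro v w w' h h'
    exact (hmatch (M.edge_vert h)).unique h h'
  -- key: if all three vertices of triangle i are saturated, one is matched to its hub
  have key : ∀ i : Fin (2 * r + 1), (∀ k : Fin 3, ∃ c, M.Adj (Sum.inr (k, i)) c) →
      ∃ k : Fin 3, M.Adj (Sum.inr (k, i)) (Sum.inl k) := by
    intro i h
    by_contra hcon
    push_neg at hcon
    have step : ∀ k : Fin 3, ∃ k' : Fin 3, k' ≠ k ∧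
        M.Adj (Sum.inr (k, i)) (Sum.inr (k', i)) := by
      intro k
      obtain ⟨c, hc⟩ := h k
      have hG := M.adj_sub hc
      match c, hc, hG with
      | Sum.inl k', hc, hG =>
        have hk : k = k' := hG
        subst hk
        exact absurd hc (hcon k)
      | Sum.inr ⟨k', j⟩, hc, hG =>
        obtain ⟨h1, h2⟩ := hG
        simp only at h1 h2
        subst h1
        exact ⟨k', fun e => h2 e.symm, hc⟩
    choose q hq hadj using step
    have hinv : ∀ k, q (q k) = k := by
      intro k
      have := uniq (hadj (q k)) (hadj k).symm
      simpa using this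
    have nofix : ¬ ∃ f : Fin 3 → Fin 3, (∀ k, f k ≠ k) ∧ (∀ k, f (f k) = k) := by decide
    exact nofix ⟨q, hq, hinv⟩
  set Q : Fin (2 * r + 1) → Prop := fun i => ∀ k : Fin 3, ∃ c, M.Adj (Sum.inr (k, i)) c
    with hQ
  -- at most 3 triangles are fully saturated
  have cardS : (Finset.univ.filter Q).card ≤ 3 := by
    have hle := Finset.card_le_card_of_injOn
      (f := fun i => if h : ∃ k : Fin 3, M.Adj (Sum.inr (k, i)) (Sum.inl k)
        then h.choose else 0)
      (s := Finset.univ.filter Q) (t := (Finset.univ : Finset (Fin 3)))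
      (fun i _ => Finset.mem_univ _) ?_
    · simpa using hle
    · intro i hi j hj hij
      simp only [Finset.coe_filter, Set.mem_setOf_eq] at hi hj
      have hi' := key i hi.2
      have hj' := key j hj.2
      simp only [dif_pos hi', dif_pos hj'] at hij
      have pi := hi'.choose_spec
      have pj := hj'.choose_spec
      rw [hij] at pi
      have := uniq pi.symm pj.symm
      simpa using this
  set P : Fin (2 * r + 1) → Prop := fun i => ∃ k : Fin 3, ∀ c, ¬ M.Adj (Sum.inr (k, i)) c
    with hP
  have cardT : 3 < (Finset.univ.filter P).card := by
    have hPQ : Finset.univ.filter P = Finset.univ.filter (fun i => ¬ Q i) := by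
      apply Finset.filter_congr
      intro i _
      simp only [hP, hQ]
      push_neg
      rfl
    rw [hPQ]
    have hsum := Finset.card_filter_add_card_filter_not
      (s := (Finset.univ : Finset (Fin (2 * r + 1)))) (p := Q)
    simp only [Finset.card_univ, Fintype.card_fin] at hsum
    omega
  set g : Fin (2 * r + 1) → Fin 3 := fun i =>
    if h : ∃ k : Fin 3, ∀ c, ¬ M.Adj (Sum.inr (k, i)) c then h.choose else 0 with hg
  obtain ⟨i, hi, j, hj, hij, hgij⟩ :=
    Finset.exists_ne_map_eq_of_card_lt_of_maps_to (t := (Finset.univ : Finset (Fin 3)))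
      (by simpa using cardT) (f := g) (fun i _ => Finset.mem_univ _)
  simp only [Finset.mem_filter, Finset.mem_univ, true_and] at hi hj
  have hiu : ∀ c, ¬ M.Adj (Sum.inr (g i, i)) c := by
    rw [hg]; simp only [dif_pos (show ∃ k : Fin 3, ∀ c, ¬ M.Adj (Sum.inr (k, i)) c from hi)]; exact hi.choose_spec
  have hju : ∀ c, ¬ M.Adj (Sum.inr (g j, j)) c := by
    rw [hg]; simp only [dif_pos (show ∃ k : Fin 3, ∀ c, ¬ M.Adj (Sum.inr (k, j)) c from hj)]; exact hj.choose_spec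
  refine ⟨Sum.inr (g i, i), Sum.inr (g i, j), ?_, hiu, ?_, Sum.inl (g i), ?_, ?_⟩
  · simp [hij]
  · rw [hgij]; exact hju
  · rfl
  · rfl
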